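/- Consider the circle case: d = 2, M = Id, V = 0, ξ(q) = ‖q‖² − 1, A = { (q,p) : ‖q‖ = 1, q·p = 0, ‖p‖² < Δt⁻² }, and Ψ_{Δt}(q, p) = (q¹, −p¹) defined by the RATTLE step with λ = (−1 + √(1 − Δt²‖p‖²))/(2Δt) as in the explicit solution. Then Ψ_{Δt}(A) = A and for all (q, p) ∈ A, (Ψ_{Δt} ∘ Ψ_{Δt})(q, p) = (q, p). -/

import Mathlib

open scoped RealInnerProductSpace

section Aux

variable {E : Type*} [NormedAddCommGroup E] [InnerProductSpace ℝ E]

/-- On the constraint set, the RATTLE step with momentum reversal simplifies to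
`(q, p) ↦ (s•q + Δt•p, (Δt‖p‖²)•q - s•p)` where `s = √(1 - Δt²‖p‖²)`. -/
lemma rattle_step_simp (Δt : ℝ) (hΔt : 0 < Δt) (q p : E)
    (hq : ‖q‖ = 1) (hqp : ⟪q, p⟫ = 0) (hp : Δt ^ 2 * ‖p‖ ^ 2 < 1) :
    ((q + Δt • p + (2 * Δt * ((-1 + Real.sqrt (1 - Δt ^ 2 * ‖p‖ ^ 2)) / (2 * Δt))) • q,
         -((p + (2 * ((-1 + Real.sqrt (1 - Δt ^ 2 * ‖p‖ ^ 2)) / (2 * Δt))) • q) -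
            ⟪q + Δt • p + (2 * Δt * ((-1 + Real.sqrt (1 - Δt ^ 2 * ‖p‖ ^ 2)) / (2 * Δt))) • q,
              p + (2 * ((-1 + Real.sqrt (1 - Δt ^ 2 * ‖p‖ ^ 2)) / (2 * Δt))) • q⟫ •
              (q + Δt • p + (2 * Δt * ((-1 + Real.sqrt (1 - Δt ^ 2 * ‖p‖ ^ 2)) / (2 * Δt))) • q)))
      : E × E)
    = (Real.sqrt (1 - Δt ^ 2 * ‖p‖ ^ 2) • q + Δt • p,
       (Δt * ‖p‖ ^ 2) • q - Real.sqrt (1 - Δt ^ 2 * ‖p‖ ^ 2) • p) := by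
  set s := Real.sqrt (1 - Δt ^ 2 * ‖p‖ ^ 2) with hs
  have hs2 : s ^ 2 = 1 - Δt ^ 2 * ‖p‖ ^ 2 := Real.sq_sqrt (by linarith)
  have hΔt' : Δt ≠ 0 := ne_of_gt hΔt
  have hpq : ⟪p, q⟫ = 0 := by rw [real_inner_comm]; exact hqp
  have hqq : ⟪q, q⟫ = 1 := by rw [real_inner_self_eq_norm_sq, hq]; norm_num
  have hpp : ⟪p, p⟫ = ‖p‖ ^ 2 := real_inner_self_eq_norm_sq p
  have h1 : 2 * Δt * ((-1 + s) / (2 * Δt)) = -1 + s := by field_simp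
  have h2 : (2 : ℝ) * ((-1 + s) / (2 * Δt)) = (-1 + s) / Δt := by
    field_simp
  rw [h1, h2]
  have hq1 : q + Δt • p + (-1 + s) • q = s • q + Δt • p := by module
  have hinner : ⟪q + Δt • p + (-1 + s) • q, p + ((-1 + s) / Δt) • q⟫ = (1 - s) / Δt := by
    rw [hq1]
    simp only [inner_add_left, inner_add_right, real_inner_smul_left, real_inner_smul_right,
      hqp, hpq, hqq, hpp]
    field_simp
    linear_combination hs2
  rw [hinner, hq1]
  refine Prod.ext rfl ?_
  show -((p + ((-1 + s) / Δt) • q) - ((1 - s) / Δt) • (s • q + Δt • p))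
      = (Δt * ‖p‖ ^ 2) • q - s • p
  match_scalars
  all_goals field_simp
  all_goals linarith [hs2]

lemma norm_eq_one_of_sq (v : E) (h : ‖v‖ ^ 2 = 1) : ‖v‖ = 1 := by
  nlinarith [norm_nonneg v]

lemma rattle_new_facts (Δt : ℝ) (hΔt : 0 < Δt) (q p : E)
    (hq : ‖q‖ = 1) (hqp : ⟪q, p⟫ = 0) (hp : Δt ^ 2 * ‖p‖ ^ 2 < 1) :
    ‖Real.sqrt (1 - Δt ^ 2 * ‖p‖ ^ 2) • q + Δt • p‖ = 1 ∧
    ⟪Real.sqrt (1 - Δt ^ 2 * ‖p‖ ^ 2) • q + Δt • p,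
      (Δt * ‖p‖ ^ 2) • q - Real.sqrt (1 - Δt ^ 2 * ‖p‖ ^ 2) • p⟫ = 0 ∧
    ‖(Δt * ‖p‖ ^ 2) • q - Real.sqrt (1 - Δt ^ 2 * ‖p‖ ^ 2) • p‖ = ‖p‖ := by
  set s := Real.sqrt (1 - Δt ^ 2 * ‖p‖ ^ 2) with hs
  have hs2 : s ^ 2 = 1 - Δt ^ 2 * ‖p‖ ^ 2 := Real.sq_sqrt (by linarith)
  have hpq : ⟪p, q⟫ = 0 := by rw [real_inner_comm]; exact hqp
  have hqq : ⟪q, q⟫ = 1 := by rw [real_inner_self_eq_norm_sq, hq]; norm_num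
  have hpp : ⟪p, p⟫ = ‖p‖ ^ 2 := real_inner_self_eq_norm_sq p
  refine ⟨?_, ?_, ?_⟩
  · apply norm_eq_one_of_sq
    rw [← real_inner_self_eq_norm_sq]
    simp only [inner_add_left, inner_add_right, real_inner_smul_left, real_inner_smul_right,
      hqp, hpq, hqq, hpp]
    linear_combination hs2
  · simp only [inner_add_left, inner_sub_right, real_inner_smul_left, real_inner_smul_right,
      hqp, hpq, hqq, hpp]
    ring
  · have h2 : ‖(Δt * ‖p‖ ^ 2) • q - s • p‖ ^ 2 = ‖p‖ ^ 2 := by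
      rw [← real_inner_self_eq_norm_sq]
      simp only [inner_sub_left, inner_sub_right, real_inner_smul_left, real_inner_smul_right,
        hqp, hpq, hqq, hpp]
      nlinarith [hs2]
    have := norm_nonneg ((Δt * ‖p‖ ^ 2) • q - s • p)
    have := norm_nonneg p
    nlinarith

end Aux

/-- In the circle case (`d = 2`, `M = Id`, `V = 0`, `ξ(q) = ‖q‖² − 1`), the RATTLE map with
momentum reversal `Ψ_{Δt}` maps `A = {(q,p) : ‖q‖ = 1, q·p = 0, ‖p‖² < Δt⁻²}` onto itself and
is an involution on `A`. -/
theorem rattle_circle_involution (Δt : ℝ) (hΔt : 0 < Δt)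
    (Ψ : EuclideanSpace ℝ (Fin 2) × EuclideanSpace ℝ (Fin 2) →
         EuclideanSpace ℝ (Fin 2) × EuclideanSpace ℝ (Fin 2))
    (hΨ : ∀ q p : EuclideanSpace ℝ (Fin 2),
      Ψ (q, p) =
        (q + Δt • p + (2 * Δt * ((-1 + Real.sqrt (1 - Δt ^ 2 * ‖p‖ ^ 2)) / (2 * Δt))) • q,
         -((p + (2 * ((-1 + Real.sqrt (1 - Δt ^ 2 * ‖p‖ ^ 2)) / (2 * Δt))) • q) -
            ⟪q + Δt • p + (2 * Δt * ((-1 + Real.sqrt (1 - Δt ^ 2 * ‖p‖ ^ 2)) / (2 * Δt))) • q,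
              p + (2 * ((-1 + Real.sqrt (1 - Δt ^ 2 * ‖p‖ ^ 2)) / (2 * Δt))) • q⟫ •
              (q + Δt • p + (2 * Δt * ((-1 + Real.sqrt (1 - Δt ^ 2 * ‖p‖ ^ 2)) / (2 * Δt))) • q))))
    (A : Set (EuclideanSpace ℝ (Fin 2) × EuclideanSpace ℝ (Fin 2)))
    (hA : A = {x | ‖x.1‖ = 1 ∧ ⟪x.1, x.2⟫ = 0 ∧ ‖x.2‖ ^ 2 < (Δt ^ 2)⁻¹}) :
    Ψ '' A = A ∧ ∀ x ∈ A, Ψ (Ψ x) = x := by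
  have hΔt2 : (0 : ℝ) < Δt ^ 2 := by positivity
  -- translate the bound
  have hbound : ∀ p : EuclideanSpace ℝ (Fin 2), ‖p‖ ^ 2 < (Δt ^ 2)⁻¹ ↔ Δt ^ 2 * ‖p‖ ^ 2 < 1 := by
    intro p
    constructor
    · intro h
      have h2 := mul_lt_mul_of_pos_left h hΔt2
      rwa [mul_inv_cancel₀ (ne_of_gt hΔt2)] at h2
    · intro h
      have h2 := mul_lt_mul_of_pos_left h (inv_pos.2 hΔt2)
      rwa [mul_one, ← mul_assoc, inv_mul_cancel₀ (ne_of_gt hΔt2), one_mul] at h2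
  -- key: Ψ maps A into A, with explicit formula
  have key : ∀ q p : EuclideanSpace ℝ (Fin 2), (q, p) ∈ A →
      Ψ (q, p) = (Real.sqrt (1 - Δt ^ 2 * ‖p‖ ^ 2) • q + Δt • p,
        (Δt * ‖p‖ ^ 2) • q - Real.sqrt (1 - Δt ^ 2 * ‖p‖ ^ 2) • p) ∧ Ψ (q, p) ∈ A := by
    intro q p hx
    rw [hA] at hx
    obtain ⟨hq, hqp, hp⟩ := hx
    have hp1 : Δt ^ 2 * ‖p‖ ^ 2 < 1 := (hbound p).1 hp
    have hform := rattle_step_simp Δt hΔt q p hq hqp hp1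
    obtain ⟨h1, h2, h3⟩ := rattle_new_facts Δt hΔt q p hq hqp hp1
    refine ⟨by rw [hΨ q p, hform], ?_⟩
    rw [hΨ q p, hform, hA]
    refine ⟨h1, h2, ?_⟩
    simpa only [h3] using hp
  have hinv : ∀ x ∈ A, Ψ (Ψ x) = x := by
    rintro ⟨q, p⟩ hx
    obtain ⟨hform, hmem⟩ := key q p hx
    rw [hA] at hx
    obtain ⟨hq, hqp, hp⟩ := hx
    have hp1 : Δt ^ 2 * ‖p‖ ^ 2 < 1 := (hbound p).1 hp
    set s := Real.sqrt (1 - Δt ^ 2 * ‖p‖ ^ 2) with hs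
    have hs2 : s ^ 2 = 1 - Δt ^ 2 * ‖p‖ ^ 2 := Real.sq_sqrt (by linarith)
    obtain ⟨hq1n, hq1p1, hp1n⟩ := rattle_new_facts Δt hΔt q p hq hqp hp1
    set q1 := s • q + Δt • p with hq1
    set p1 := (Δt * ‖p‖ ^ 2) • q - s • p with hp1'
    have hp1b : Δt ^ 2 * ‖p1‖ ^ 2 < 1 := by rw [hp1n]; exact hp1
    have hform2 := rattle_step_simp Δt hΔt q1 p1 hq1n hq1p1 hp1b
    rw [hform, hΨ q1 p1, hform2, hp1n, ← hs]
    refine Prod.ext ?_ ?_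
    · show s • q1 + Δt • p1 = q
      rw [hq1, hp1']
      match_scalars
      · linear_combination hs2
      · ring
    · show (Δt * ‖p‖ ^ 2) • q1 - s • p1 = p
      rw [hq1, hp1']
      match_scalars
      · ring
      · linear_combination hs2
  refine ⟨?_, hinv⟩
  apply Set.Subset.antisymm
  · rintro _ ⟨⟨q, p⟩, hx, rfl⟩
    exact (key q p hx).2
  · intro x hx
    exact ⟨Ψ x, (key x.1 x.2 hx).2, hinv x hx⟩
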